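/- Let $1<p,q<\infty$, $\mu\in A_{p,p}$, $\lambda\in A_{q,q}$, and set $s=s(p,q)=1+\frac{1/q+1/p'}{1/p+1/q'}$. Then $(\mu/\lambda)^{1/2}=\nu^{1/s}$ where $\nu=(\mu/\lambda)^{1/(1/p+1/q')}$, and $[(\mu/\lambda)^{1/2}]_{A_{s,s}} \le ([\mu]_{A_{p,p}}[\lambda]_{A_{q,q}})^{1/2}$; in particular $\nu\in A_s \subset A_\infty$. -/

import Mathlib

open MeasureTheory

noncomputable def Cube (d : ℕ) (c : Fin d → ℝ) (l : ℝ) : Set (Fin d → ℝ) :=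
  Set.univ.pi fun i => Set.Icc (c i) (c i + l)

noncomputable def avg (d : ℕ) (f : (Fin d → ℝ) → ℝ) (Q : Set (Fin d → ℝ)) : ℝ :=
  (∫ x in Q, f x) / (volume Q).toReal

/-- conjugate exponent -/
noncomputable def conj (p : ℝ) : ℝ := p / (p - 1)

lemma memLp_of_integrable_rpow {α : Type*} [MeasurableSpace α] {ν : Measure α}
    {f : α → ℝ} {P : ℝ} (hP : 0 < P) (hf : ∀ x, 0 < f x)
    (h : Integrable (fun x => f x ^ P) ν) : MemLp f (ENNReal.ofReal P) ν := by
  have hfm : AEStronglyMeasurable f ν := by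
    have : f = fun x => (f x ^ P) ^ (1/P) := by
      funext x
      rw [← Real.rpow_mul (hf x).le, mul_one_div, div_self hP.ne', Real.rpow_one]
    rw [this]
    exact (Real.continuous_rpow_const (by positivity)).comp_aestronglyMeasurable
      h.aestronglyMeasurable
  have key := (memLp_norm_rpow_iff (q := ENNReal.ofReal P) (p := ENNReal.ofReal P) hfm
    (by simp [hP]) ENNReal.ofReal_ne_top)
  rw [ENNReal.div_self (by simp [hP]) ENNReal.ofReal_ne_top] at key
  refine key.mp ?_
  rw [memLp_one_iff_integrable]
  have : (fun x => ‖f x‖ ^ (ENNReal.ofReal P).toReal) = fun x => f x ^ P := by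
    funext x
    rw [Real.norm_of_nonneg (hf x).le, ENNReal.toReal_ofReal hP.le]
  rw [this]; exact h

lemma volume_cube (d : ℕ) (c : Fin d → ℝ) {l : ℝ} (hl : 0 < l) :
    (volume (Cube d c l)).toReal = l ^ d := by
  rw [Cube, volume_pi_pi]
  simp [Real.volume_Icc, ← ENNReal.ofReal_pow hl.le]
  positivity

lemma avg_nonneg' (d : ℕ) (f : (Fin d → ℝ) → ℝ) (Q : Set (Fin d → ℝ))
    (h : ∀ x, 0 ≤ f x) : 0 ≤ avg d f Q :=
  div_nonneg (integral_nonneg h) ENNReal.toReal_nonneg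

lemma avg_holder (d : ℕ) (c : Fin d → ℝ) {l : ℝ} (hl : 0 < l) (f g : (Fin d → ℝ) → ℝ)
    (hf : ∀ x, 0 < f x) (hg : ∀ x, 0 < g x) {P Q : ℝ} (hPQ : Real.HolderConjugate P Q)
    (hfP : IntegrableOn (fun x => f x ^ P) (Cube d c l) volume)
    (hgQ : IntegrableOn (fun x => g x ^ Q) (Cube d c l) volume) :
    avg d (fun x => f x * g x) (Cube d c l) ≤
      avg d (fun x => f x ^ P) (Cube d c l) ^ (1/P) *
        avg d (fun x => g x ^ Q) (Cube d c l) ^ (1/Q) := by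
  have hV : 0 < (volume (Cube d (c := c) l)).toReal := by
    rw [volume_cube d c hl]; positivity
  have hint := integral_mul_le_Lp_mul_Lq_of_nonneg (μ := volume.restrict (Cube d c l)) hPQ
    (Filter.Eventually.of_forall fun x => (hf x).le)
    (Filter.Eventually.of_forall fun x => (hg x).le)
    (memLp_of_integrable_rpow hPQ.pos hf hfP)
    (memLp_of_integrable_rpow hPQ.symm.pos hg hgQ)
  have hI1 : 0 ≤ ∫ x in Cube d c l, f x ^ P :=
    integral_nonneg fun x => Real.rpow_nonneg (hf x).le _
  have hI2 : 0 ≤ ∫ x in Cube d c l, g x ^ Q :=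
    integral_nonneg fun x => Real.rpow_nonneg (hg x).le _
  rw [avg, avg, avg, Real.div_rpow hI1 hV.le, Real.div_rpow hI2 hV.le, div_le_iff₀ hV]
  calc ∫ x in Cube d c l, f x * g x ≤
      (∫ x in Cube d c l, f x ^ P) ^ (1/P) * (∫ x in Cube d c l, g x ^ Q) ^ (1/Q) := hint
    _ = (∫ x in Cube d c l, f x ^ P) ^ (1/P) / (volume (Cube d c l)).toReal ^ (1/P) *
        ((∫ x in Cube d c l, g x ^ Q) ^ (1/Q) / (volume (Cube d c l)).toReal ^ (1/Q)) *
        (volume (Cube d c l)).toReal := by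
      rw [div_mul_div_comm, ← Real.rpow_add hV]
      rw [show 1/P + 1/Q = 1 from by
        simpa [one_div] using hPQ.inv_add_inv_eq_inv, Real.rpow_one]
      field_simp
    _ = _ := by ring

/-- With `s = s(p,q) = 1 + (1/q+1/p')/(1/p+1/q')`, one has the pointwise
identity `(μ/λ)^{1/2} = ν^{1/s}` where `ν = (μ/λ)^{1/(1/p+1/q')}`, the characteristic
bound `[(μ/λ)^{1/2}]_{A_{s,s}} ≤ ([μ]_{A_{p,p}}[λ]_{A_{q,q}})^{1/2}`, and in particular
`ν ∈ A_s` with `[ν]_{A_s} ≤ ([μ]_{A_{p,p}}[λ]_{A_{q,q}})^{1/(1/p+1/q')}`. -/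
theorem stmt2 (d : ℕ) (hd : 0 < d) (p q : ℝ) (hp : 1 < p) (hq : 1 < q)
    (μ lam : (Fin d → ℝ) → ℝ) (hμpos : ∀ x, 0 < μ x) (hlampos : ∀ x, 0 < lam x)
    (hμp : ∀ (c : Fin d → ℝ) (l : ℝ), 0 < l →
      IntegrableOn (fun x => μ x ^ p) (Cube d c l) volume)
    (hμp' : ∀ (c : Fin d → ℝ) (l : ℝ), 0 < l →
      IntegrableOn (fun x => μ x ^ (-(conj p))) (Cube d c l) volume)
    (hlamq : ∀ (c : Fin d → ℝ) (l : ℝ), 0 < l →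
      IntegrableOn (fun x => lam x ^ q) (Cube d c l) volume)
    (hlamq' : ∀ (c : Fin d → ℝ) (l : ℝ), 0 < l →
      IntegrableOn (fun x => lam x ^ (-(conj q))) (Cube d c l) volume)
    (Cμ Clam : ℝ) (hCμ : 0 < Cμ) (hClam : 0 < Clam)
    (hAμ : ∀ (c : Fin d → ℝ) (l : ℝ), 0 < l →
      avg d (fun x => μ x ^ p) (Cube d c l) ^ (1 / p) *
        avg d (fun x => μ x ^ (-(conj p))) (Cube d c l) ^ (1 / conj p) ≤ Cμ)
    (hAlam : ∀ (c : Fin d → ℝ) (l : ℝ), 0 < l →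
      avg d (fun x => lam x ^ q) (Cube d c l) ^ (1 / q) *
        avg d (fun x => lam x ^ (-(conj q))) (Cube d c l) ^ (1 / conj q) ≤ Clam)
    (s : ℝ) (hs : s = 1 + (1 / q + 1 / conj p) / (1 / p + 1 / conj q)) :
    (∀ x, (μ x / lam x) ^ ((1 : ℝ) / 2)
        = ((μ x / lam x) ^ ((1 / p + 1 / conj q)⁻¹)) ^ s⁻¹) ∧
    (∀ (c : Fin d → ℝ) (l : ℝ), 0 < l →
      avg d (fun x => ((μ x / lam x) ^ ((1 : ℝ) / 2)) ^ s) (Cube d c l) ^ (1 / s) *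
        avg d (fun x => ((μ x / lam x) ^ ((1 : ℝ) / 2)) ^ (-(conj s))) (Cube d c l)
          ^ (1 / conj s)
        ≤ (Cμ * Clam) ^ ((1 : ℝ) / 2)) ∧
    (∀ (c : Fin d → ℝ) (l : ℝ), 0 < l →
      avg d (fun x => (μ x / lam x) ^ ((1 / p + 1 / conj q)⁻¹)) (Cube d c l) *
        avg d (fun x => ((μ x / lam x) ^ ((1 / p + 1 / conj q)⁻¹)) ^ (-(1 / (s - 1))))
          (Cube d c l) ^ (s - 1)
        ≤ (Cμ * Clam) ^ ((1 / p + 1 / conj q)⁻¹)) := by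
  have hp0 : (0:ℝ) < p := lt_trans one_pos hp
  have hq0 : (0:ℝ) < q := lt_trans one_pos hq
  have hcp0 : 0 < conj p := div_pos hp0 (by linarith)
  have hcq0 : 0 < conj q := div_pos hq0 (by linarith)
  have hicp : 1 / conj p = 1 - 1/p := by rw [conj]; field_simp
  have hicq : 1 / conj q = 1 - 1/q := by rw [conj]; field_simp
  set a := 1/p + 1/conj q with ha_def
  set b := 1/q + 1/conj p with hb_def
  have hipq : 1/q < 1 := by rw [div_lt_one hq0]; exact hq
  have hipp : 1/p < 1 := by rw [div_lt_one hp0]; exact hp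
  have ha : 0 < a := by
    rw [ha_def, hicq]
    have h1 : 0 < 1/p := by positivity
    linarith
  have hb : 0 < b := by
    rw [hb_def, hicp]
    have h1 : 0 < 1/q := by positivity
    linarith
  have hab : a + b = 2 := by rw [ha_def, hb_def, hicp, hicq]; ring
  have hs2 : s = 2/a := by
    rw [hs]
    field_simp
    linarith
  have hs0 : 0 < s := by rw [hs2]; positivity
  have hs1' : s - 1 = b/a := by rw [hs2]; field_simp; linarith
  have hs1 : 1 < s := by have := div_pos hb ha; linarith
  have hcs : conj s = 2/b := by
    rw [conj, hs1', hs2]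
    rw [div_div_div_cancel_right₀]
    exact ha.ne'
  have hcs0 : 0 < conj s := by rw [hcs]; positivity
  -- pointwise identities
  have ht : ∀ x, 0 < μ x / lam x := fun x => div_pos (hμpos x) (hlampos x)
  have part1 : ∀ x, (μ x / lam x) ^ ((1 : ℝ) / 2)
      = ((μ x / lam x) ^ a⁻¹) ^ s⁻¹ := by
    intro x
    rw [← Real.rpow_mul (ht x).le]
    congr 1
    rw [hs2]
    field_simp
  -- function identities
  have F1 : (fun x => ((μ x / lam x) ^ ((1:ℝ)/2)) ^ s)
      = fun x => (μ x ^ a⁻¹) * (lam x ^ (-a⁻¹)) := by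
    funext x
    rw [← Real.rpow_mul (ht x).le,
      show (1:ℝ)/2 * s = a⁻¹ by rw [hs2]; field_simp,
      Real.div_rpow (hμpos x).le (hlampos x).le, Real.rpow_neg (hlampos x).le, div_eq_mul_inv]
  have F2 : (fun x => ((μ x / lam x) ^ ((1:ℝ)/2)) ^ (-(conj s)))
      = fun x => (lam x ^ b⁻¹) * (μ x ^ (-b⁻¹)) := by
    funext x
    rw [← Real.rpow_mul (ht x).le,
      show (1:ℝ)/2 * (-(conj s)) = -b⁻¹ by rw [hcs]; field_simp,
      Real.rpow_neg (ht x).le, Real.div_rpow (hμpos x).le (hlampos x).le, inv_div,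
      div_eq_mul_inv, ← Real.rpow_neg (hμpos x).le]
  have F1P : (fun x => (μ x ^ a⁻¹) ^ (p*a)) = fun x => μ x ^ p := by
    funext x
    rw [← Real.rpow_mul (hμpos x).le]
    congr 1
    field_simp
  have F1Q : (fun x => (lam x ^ (-a⁻¹)) ^ (conj q * a)) = fun x => lam x ^ (-(conj q)) := by
    funext x
    rw [← Real.rpow_mul (hlampos x).le]
    congr 1
    field_simp
  have F2P : (fun x => (lam x ^ b⁻¹) ^ (q*b)) = fun x => lam x ^ q := by
    funext x
    rw [← Real.rpow_mul (hlampos x).le]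
    congr 1
    field_simp
  have F2Q : (fun x => (μ x ^ (-b⁻¹)) ^ (conj p * b)) = fun x => μ x ^ (-(conj p)) := by
    funext x
    rw [← Real.rpow_mul (hμpos x).le]
    congr 1
    field_simp
  have hce1 : Real.HolderConjugate (p*a) (conj q * a) := by
    rw [Real.holderConjugate_iff]
    constructor
    · have h1 : p * a = 1 + p / conj q := by
        rw [ha_def, mul_add, mul_one_div, div_self hp0.ne', mul_one_div]
      rw [h1]
      have := div_pos hp0 hcq0
      linarith
    · rw [ha_def]
      field_simp
  have hce2 : Real.HolderConjugate (q*b) (conj p * b) := by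
    rw [Real.holderConjugate_iff]
    constructor
    · have h1 : q * b = 1 + q / conj p := by
        rw [hb_def, mul_add, mul_one_div, div_self hq0.ne', mul_one_div]
      rw [h1]
      have := div_pos hq0 hcp0
      linarith
    · rw [hb_def]
      field_simp
  have key : ∀ (c : Fin d → ℝ) (l : ℝ), 0 < l →
      avg d (fun x => ((μ x / lam x) ^ ((1 : ℝ) / 2)) ^ s) (Cube d c l) ^ (1 / s) *
        avg d (fun x => ((μ x / lam x) ^ ((1 : ℝ) / 2)) ^ (-(conj s))) (Cube d c l)
          ^ (1 / conj s)
        ≤ (Cμ * Clam) ^ ((1 : ℝ) / 2) := by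
    intro c l hl
    set X := avg d (fun x => μ x ^ p) (Cube d c l) with hX_def
    set Y := avg d (fun x => lam x ^ (-(conj q))) (Cube d c l) with hY_def
    set Z := avg d (fun x => μ x ^ (-(conj p))) (Cube d c l) with hZ_def
    set W := avg d (fun x => lam x ^ q) (Cube d c l) with hW_def
    have hX : 0 ≤ X := avg_nonneg' _ _ _ fun x => Real.rpow_nonneg (hμpos x).le _
    have hY : 0 ≤ Y := avg_nonneg' _ _ _ fun x => Real.rpow_nonneg (hlampos x).le _
    have hZ : 0 ≤ Z := avg_nonneg' _ _ _ fun x => Real.rpow_nonneg (hμpos x).le _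
    have hW : 0 ≤ W := avg_nonneg' _ _ _ fun x => Real.rpow_nonneg (hlampos x).le _
    have hA1 : 0 ≤ avg d (fun x => ((μ x / lam x) ^ ((1 : ℝ) / 2)) ^ s) (Cube d c l) :=
      avg_nonneg' _ _ _ fun x => Real.rpow_nonneg (Real.rpow_nonneg (ht x).le _) _
    have hA2 : 0 ≤ avg d (fun x => ((μ x / lam x) ^ ((1 : ℝ) / 2)) ^ (-(conj s)))
        (Cube d c l) :=
      avg_nonneg' _ _ _ fun x => Real.rpow_nonneg (Real.rpow_nonneg (ht x).le _) _
    have h1 : avg d (fun x => ((μ x / lam x) ^ ((1 : ℝ) / 2)) ^ s) (Cube d c l)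
        ≤ X ^ (1/(p*a)) * Y ^ (1/(conj q * a)) := by
      rw [F1]
      have h := avg_holder d c hl (fun x => μ x ^ a⁻¹) (fun x => lam x ^ (-a⁻¹))
        (fun x => Real.rpow_pos_of_pos (hμpos x) _)
        (fun x => Real.rpow_pos_of_pos (hlampos x) _) hce1
        (by rw [F1P]; exact hμp c l hl) (by rw [F1Q]; exact hlamq' c l hl)
      rw [F1P, F1Q] at h
      exact h
    have h2 : avg d (fun x => ((μ x / lam x) ^ ((1 : ℝ) / 2)) ^ (-(conj s))) (Cube d c l)
        ≤ W ^ (1/(q*b)) * Z ^ (1/(conj p * b)) := by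
      rw [F2]
      have h := avg_holder d c hl (fun x => lam x ^ b⁻¹) (fun x => μ x ^ (-b⁻¹))
        (fun x => Real.rpow_pos_of_pos (hlampos x) _)
        (fun x => Real.rpow_pos_of_pos (hμpos x) _) hce2
        (by rw [F2P]; exact hlamq c l hl) (by rw [F2Q]; exact hμp' c l hl)
      rw [F2P, F2Q] at h
      exact h
    have e1 : 1/(p*a) * (1/s) = 1/p * (1/2) := by rw [hs2]; field_simp
    have e2 : 1/(conj q * a) * (1/s) = 1/conj q * (1/2) := by rw [hs2]; field_simp
    have e3 : 1/(q*b) * (1/conj s) = 1/q * (1/2) := by rw [hcs]; field_simp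
    have e4 : 1/(conj p * b) * (1/conj s) = 1/conj p * (1/2) := by rw [hcs]; field_simp
    calc avg d (fun x => ((μ x / lam x) ^ ((1 : ℝ) / 2)) ^ s) (Cube d c l) ^ (1 / s) *
        avg d (fun x => ((μ x / lam x) ^ ((1 : ℝ) / 2)) ^ (-(conj s))) (Cube d c l)
          ^ (1 / conj s)
        ≤ (X ^ (1/(p*a)) * Y ^ (1/(conj q * a))) ^ (1/s) *
          (W ^ (1/(q*b)) * Z ^ (1/(conj p * b))) ^ (1/conj s) := by
          apply mul_le_mul (Real.rpow_le_rpow hA1 h1 (by positivity))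
            (Real.rpow_le_rpow hA2 h2 (by positivity)) (Real.rpow_nonneg hA2 _)
          exact Real.rpow_nonneg
            (mul_nonneg (Real.rpow_nonneg hX _) (Real.rpow_nonneg hY _)) _
      _ = (X ^ (1/p)) ^ ((1:ℝ)/2) * (Z ^ (1/conj p)) ^ ((1:ℝ)/2) *
          ((W ^ (1/q)) ^ ((1:ℝ)/2) * (Y ^ (1/conj q)) ^ ((1:ℝ)/2)) := by
          rw [Real.mul_rpow (Real.rpow_nonneg hX _) (Real.rpow_nonneg hY _),
            Real.mul_rpow (Real.rpow_nonneg hW _) (Real.rpow_nonneg hZ _),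
            ← Real.rpow_mul hX, ← Real.rpow_mul hY, ← Real.rpow_mul hW, ← Real.rpow_mul hZ,
            ← Real.rpow_mul hX, ← Real.rpow_mul hY, ← Real.rpow_mul hW, ← Real.rpow_mul hZ,
            e1, e2, e3, e4]
          ring
      _ = (X ^ (1/p) * Z ^ (1/conj p)) ^ ((1:ℝ)/2) *
          (W ^ (1/q) * Y ^ (1/conj q)) ^ ((1:ℝ)/2) := by
          rw [Real.mul_rpow (Real.rpow_nonneg hX _) (Real.rpow_nonneg hZ _),
            Real.mul_rpow (Real.rpow_nonneg hW _) (Real.rpow_nonneg hY _)]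
      _ ≤ Cμ ^ ((1:ℝ)/2) * Clam ^ ((1:ℝ)/2) := by
          apply mul_le_mul
            (Real.rpow_le_rpow
              (mul_nonneg (Real.rpow_nonneg hX _) (Real.rpow_nonneg hZ _))
              (hAμ c l hl) (by norm_num))
            (Real.rpow_le_rpow
              (mul_nonneg (Real.rpow_nonneg hW _) (Real.rpow_nonneg hY _))
              (hAlam c l hl) (by norm_num))
            (Real.rpow_nonneg
              (mul_nonneg (Real.rpow_nonneg hW _) (Real.rpow_nonneg hY _)) _)
            (Real.rpow_nonneg hCμ.le _)
      _ = (Cμ * Clam) ^ ((1:ℝ)/2) := (Real.mul_rpow hCμ.le hClam.le).symm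
  refine ⟨part1, key, ?_⟩
  intro c l hl
  have F3 : (fun x => (μ x / lam x) ^ a⁻¹)
      = fun x => ((μ x / lam x) ^ ((1:ℝ)/2)) ^ s := by
    funext x
    rw [← Real.rpow_mul (ht x).le]
    congr 1
    rw [hs2]
    field_simp
  have F4 : (fun x => ((μ x / lam x) ^ a⁻¹) ^ (-(1/(s-1))))
      = fun x => ((μ x / lam x) ^ ((1:ℝ)/2)) ^ (-(conj s)) := by
    funext x
    rw [← Real.rpow_mul (ht x).le, ← Real.rpow_mul (ht x).le]
    congr 1
    rw [hs1', hcs]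
    field_simp
  rw [F3, F4]
  have hA1 : 0 ≤ avg d (fun x => ((μ x / lam x) ^ ((1 : ℝ) / 2)) ^ s) (Cube d c l) :=
    avg_nonneg' _ _ _ fun x => Real.rpow_nonneg (Real.rpow_nonneg (ht x).le _) _
  have hA2 : 0 ≤ avg d (fun x => ((μ x / lam x) ^ ((1 : ℝ) / 2)) ^ (-(conj s)))
      (Cube d c l) :=
    avg_nonneg' _ _ _ fun x => Real.rpow_nonneg (Real.rpow_nonneg (ht x).le _) _
  have k := key c l hl
  calc avg d (fun x => ((μ x / lam x) ^ ((1:ℝ)/2)) ^ s) (Cube d c l) *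
      avg d (fun x => ((μ x / lam x) ^ ((1:ℝ)/2)) ^ (-(conj s))) (Cube d c l) ^ (s-1)
      = (avg d (fun x => ((μ x / lam x) ^ ((1:ℝ)/2)) ^ s) (Cube d c l) ^ (1/s) *
        avg d (fun x => ((μ x / lam x) ^ ((1:ℝ)/2)) ^ (-(conj s))) (Cube d c l)
          ^ (1/conj s)) ^ s := by
        rw [Real.mul_rpow (Real.rpow_nonneg hA1 _) (Real.rpow_nonneg hA2 _),
          ← Real.rpow_mul hA1, ← Real.rpow_mul hA2,
          show 1/s*s = 1 by field_simp,
          show 1/conj s * s = s - 1 by rw [hs1', hcs, hs2]; field_simp,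
          Real.rpow_one]
    _ ≤ ((Cμ * Clam) ^ ((1:ℝ)/2)) ^ s := by
        apply Real.rpow_le_rpow _ k hs0.le
        exact mul_nonneg (Real.rpow_nonneg hA1 _) (Real.rpow_nonneg hA2 _)
    _ = (Cμ * Clam) ^ a⁻¹ := by
        rw [← Real.rpow_mul (by positivity)]
        congr 1
        rw [hs2]
        field_simp
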